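/- Let μ = (b₁ ≥ ⋯ ≥ b_m ≥ 0) be weakly decreasing nonnegative integers with i(μ) nonzero entries, and let k ≥ 0. There exists a chain μ = ν⁰, ν¹, …, ν^k with each ν^{j+1} an interleaving of ν^j and ν^k = 0 (the zero weight) if and only if k ≥ i(μ). -/

import Mathlib

/-- The number of nonzero entries `i(μ)` of a weight `μ = (b₁,…,b_m)`. -/
def numNonzero {m : ℕ} (μ : Fin m → ℕ) : ℕ :=
  (Finset.univ.filter fun j => μ j ≠ 0).card

/-- `ν` is a Gelfand–Tsetlin interleaving of `μ` (with zero-padding to a common length):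
`ν` is weakly decreasing, nonnegative, and `λ₁ ≥ ν₁ ≥ λ₂ ≥ ν₂ ≥ ⋯`. -/
def Interleaves {m : ℕ} (μ ν : Fin m → ℕ) : Prop :=
  (∀ i j : Fin m, i ≤ j → ν j ≤ ν i) ∧
  (∀ i : Fin m, ν i ≤ μ i) ∧
  (∀ (i : ℕ) (h : i + 1 < m), μ ⟨i + 1, h⟩ ≤ ν ⟨i, by omega⟩)

/-- `ReachesZero μ k` holds iff there is a chain `μ = ν⁰, ν¹, …, ν^k` with each `ν^{j+1}`
an interleaving of `ν^j` and `ν^k = 0`. -/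
def ReachesZero {m : ℕ} (μ : Fin m → ℕ) : ℕ → Prop
  | 0 => μ = 0
  | k + 1 => ∃ ν : Fin m → ℕ, Interleaves μ ν ∧ ReachesZero ν k

lemma lt_numNonzero {m : ℕ} {f : Fin m → ℕ}
    (hf : ∀ i j : Fin m, i ≤ j → f j ≤ f i) {j : Fin m} (hj : f j ≠ 0) :
    (j : ℕ) < numNonzero f := by
  have hsub : Finset.Iic j ⊆ Finset.univ.filter fun i => f i ≠ 0 := by
    intro i hi
    simp only [Finset.mem_Iic] at hi
    simp only [Finset.mem_filter, Finset.mem_univ, true_and]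
    intro h0
    exact hj (Nat.le_antisymm (h0 ▸ hf i j hi) (Nat.zero_le _))
  have hcard := Finset.card_le_card hsub
  unfold numNonzero
  have : (Finset.Iic j).card = (j : ℕ) + 1 := by
    simp [Fin.card_Iic]
  omega

lemma numNonzero_le_of_lt {m t : ℕ} {f : Fin m → ℕ}
    (h : ∀ j : Fin m, f j ≠ 0 → (j : ℕ) < t) : numNonzero f ≤ t := by
  classical
  unfold numNonzero
  have : (Finset.univ.filter fun j => f j ≠ 0).card ≤ (Finset.range t).card := by
    refine Finset.card_le_card_of_injOn (fun j => (j : ℕ)) ?_ ?_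
    · intro j hj
      simp only [Finset.mem_coe, Finset.mem_filter, Finset.mem_univ, true_and] at hj
      simpa using h j hj
    · intro a _ b _ hab; exact Fin.val_injective hab
  simpa using this

lemma rz_forward {m : ℕ} (k : ℕ) : ∀ (μ : Fin m → ℕ),
    ReachesZero μ k → numNonzero μ ≤ k := by
  induction k with
  | zero =>
    intro μ h
    rw [show μ = 0 from h]
    have : numNonzero (0 : Fin m → ℕ) = 0 := by
      unfold numNonzero
      simp
    omega
  | succ k ih =>
    intro μ h
    obtain ⟨ν, ⟨hdec, _, hint⟩, hrz⟩ := h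
    have hν := ih ν hrz
    have : numNonzero μ ≤ numNonzero ν + 1 := by
      apply numNonzero_le_of_lt
      intro j hj
      rcases Nat.eq_zero_or_pos (j : ℕ) with h0 | h0
      · omega
      · obtain ⟨i, hi⟩ : ∃ i : ℕ, (j : ℕ) = i + 1 := ⟨(j : ℕ) - 1, by omega⟩
        have hjm : i + 1 < m := hi ▸ j.isLt
        have hle : μ ⟨i + 1, hjm⟩ ≤ ν ⟨i, by omega⟩ := hint i hjm
        have hjj : j = ⟨i + 1, hjm⟩ := Fin.ext hi
        have hνne : ν ⟨i, by omega⟩ ≠ 0 := by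
          intro h0'
          apply hj
          rw [hjj]
          omega
        have := lt_numNonzero hdec hνne
        simp at this
        omega
    omega

lemma rz_backward {m : ℕ} (k : ℕ) : ∀ (μ : Fin m → ℕ),
    (∀ i j : Fin m, i ≤ j → μ j ≤ μ i) → numNonzero μ ≤ k → ReachesZero μ k := by
  induction k with
  | zero =>
    intro μ _ h
    show μ = 0
    have hc : (Finset.univ.filter fun j => μ j ≠ 0) = ∅ :=
      Finset.card_eq_zero.mp (Nat.le_zero.mp h)
    funext j
    by_contra hj
    have hmem : j ∈ (Finset.univ.filter fun j => μ j ≠ 0) := by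
      simp only [Finset.mem_filter, Finset.mem_univ, true_and]
      simpa using hj
    rw [hc] at hmem
    simp at hmem
  | succ k ih =>
    intro μ hμ h
    set ν : Fin m → ℕ := fun i => if h : (i : ℕ) + 1 < m then μ ⟨(i : ℕ) + 1, h⟩ else 0
      with hν
    have hνval : ∀ (i : ℕ) (h : i + 1 < m), ν ⟨i, by omega⟩ = μ ⟨i + 1, h⟩ := by
      intro i hi
      simp only [hν]
      rw [dif_pos hi]
    have hνdec : ∀ i j : Fin m, i ≤ j → ν j ≤ ν i := by
      intro i j hij
      by_cases hj1 : (j : ℕ) + 1 < m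
      · have hi1 : (i : ℕ) + 1 < m := by
          have := Fin.le_def.mp hij; omega
        rw [hνval j hj1, hνval i hi1]
        exact hμ _ _ (by rw [Fin.le_def]; have := Fin.le_def.mp hij; simp at this ⊢; omega)
      · simp only [hν]
        rw [dif_neg hj1]
        omega
    refine ⟨ν, ⟨hνdec, ?_, ?_⟩, ?_⟩
    · intro i
      by_cases hi1 : (i : ℕ) + 1 < m
      · rw [show ν i = μ ⟨(i:ℕ)+1, hi1⟩ from by simpa using hνval i hi1]
        exact hμ _ _ (by rw [Fin.le_def]; simp)
      · simp only [hν]; rw [dif_neg hi1]; omega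
    · intro i hi
      rw [hνval i hi]
    · apply ih ν hνdec
      apply numNonzero_le_of_lt
      intro j hj
      by_cases hj1 : (j : ℕ) + 1 < m
      · have hne : μ ⟨(j:ℕ)+1, hj1⟩ ≠ 0 := by
          rw [← hνval j hj1]; simpa using hj
        have := lt_numNonzero hμ hne
        simp at this
        omega
      · exfalso; apply hj; simp only [hν]; rw [dif_neg hj1]

/-- For a weakly decreasing `μ = (b₁ ≥ ⋯ ≥ b_m ≥ 0)` with `i(μ)` nonzero entries and
`k ≥ 0`, there is a chain of `k` successive interleavings from `μ` to the zero weight if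
and only if `k ≥ i(μ)`. -/
theorem stmt17 (m : ℕ) (μ : Fin m → ℕ)
    (hμ : ∀ i j : Fin m, i ≤ j → μ j ≤ μ i) (k : ℕ) :
    ReachesZero μ k ↔ numNonzero μ ≤ k := by
  exact ⟨rz_forward k μ, rz_backward k μ hμ⟩
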